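/- Let f : ℤ_p → ℤ_p be 1-Lipschitz with van der Put coefficients B_m satisfying (1) Σ_{m=0}^{p−1} B_m ≡ 0 (mod p) and (2) Σ_{m=p^{n−1}}^{p^n−1} B_m ≡ 0 (mod p^n) for all n ≥ 2. Then there exists a 1-Lipschitz function g : ℤ_p → ℤ_p with f(x) = g(x+1) − g(x) for all x. -/

import Mathlib

open MeasureTheory Finset

namespace VDP

noncomputable instance (p : ℕ) [Fact p.Prime] : MeasurableSpace ℤ_[p] := borel _
instance (p : ℕ) [Fact p.Prime] : BorelSpace ℤ_[p] := ⟨rfl⟩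

/-- The Haar probability measure on `ℤ_[p]`. -/
noncomputable def haarZp (p : ℕ) [Fact p.Prime] : Measure ℤ_[p] :=
  Measure.addHaarMeasure ⊤

/-- `f` is 1-Lipschitz. -/
def IsLip (p : ℕ) [Fact p.Prime] (f : ℤ_[p] → ℤ_[p]) : Prop :=
  ∀ x y : ℤ_[p], ‖f x - f y‖ ≤ ‖x - y‖

/-- The van der Put basis function `χ(m, x)` on `ℤ_[p]` (with `⌊log_p 0⌋ = 0`). -/
noncomputable def chi (p : ℕ) [Fact p.Prime] (m : ℕ) (x : ℤ_[p]) : ℤ_[p] :=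
  if ‖x - (m : ℤ_[p])‖ ≤ ((p : ℝ) ^ (Nat.log p m + 1))⁻¹ then 1 else 0

/-- `q(m) = m_s p^s`, the leading term of the `p`-adic expansion of `m`. -/
def q (p m : ℕ) : ℕ := m / p ^ Nat.log p m * p ^ Nat.log p m

/-- `f` has van der Put expansion with coefficients `B`. -/
def vdpExpansion (p : ℕ) [Fact p.Prime] (f : ℤ_[p] → ℤ_[p]) (B : ℕ → ℤ_[p]) : Prop :=
  ∀ x, f x = ∑' m, B m * chi p m x

/-- `f` is bijective modulo `p^n`. -/
def BijModPow (p : ℕ) [Fact p.Prime] (f : ℤ_[p] → ℤ_[p]) (n : ℕ) : Prop :=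
  Function.Bijective fun a : ZMod (p ^ n) => PadicInt.toZModPow n (f ((a.val : ℕ) : ℤ_[p]))

/-- `f` is transitive modulo `p^n`. -/
def TransModPow (p : ℕ) [Fact p.Prime] (f : ℤ_[p] → ℤ_[p]) (n : ℕ) : Prop :=
  ∀ x : ℤ_[p], ∀ a : ZMod (p ^ n), ∃ k : ℕ, PadicInt.toZModPow n (f^[k] x) = a

/-- The `i`-th digit of the canonical `p`-adic expansion of `x`. -/
noncomputable def digit (p : ℕ) [Fact p.Prime] (x : ℤ_[p]) (i : ℕ) : ℕ :=
  x.appr (i + 1) / p ^ i % p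

section Aux
open VDP Finset
variable {p : ℕ} [hp : Fact p.Prime]

lemma pdvd_iff_norm_le {n : ℕ} {x : ℤ_[p]} :
    (p : ℤ_[p]) ^ n ∣ x ↔ ‖x‖ ≤ (p : ℝ) ^ (-n : ℤ) := by
  rw [PadicInt.norm_le_pow_iff_mem_span_pow, Ideal.mem_span_singleton]

lemma chi_nat (m k : ℕ) :
    chi p m (k : ℤ_[p]) =
      if ((p : ℤ) ^ (Nat.log p m + 1)) ∣ ((k : ℤ) - (m : ℤ)) then 1 else 0 := by
  have hc : ((k : ℤ_[p]) - (m : ℤ_[p])) = (((k : ℤ) - (m : ℤ) : ℤ) : ℤ_[p]) := by push_cast; ring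
  have h2 : ((p : ℝ) ^ (Nat.log p m + 1))⁻¹ = (p : ℝ) ^ (-(Nat.log p m + 1 : ℕ) : ℤ) := by
    rw [zpow_neg, zpow_natCast]
  unfold chi
  rw [hc, h2, if_congr PadicInt.norm_int_le_pow_iff_dvd rfl rfl]

lemma chi_self (m : ℕ) : chi p m (m : ℤ_[p]) = 1 := by
  rw [chi_nat]; simp

lemma chi_eq_zero_of_ne {m k : ℕ} (hne : k ≠ m) (hk : k < p ^ (Nat.log p m + 1)) :
    chi p m (k : ℤ_[p]) = 0 := by
  rw [chi_nat, if_neg]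
  intro hdvd
  have hm : m < p ^ (Nat.log p m + 1) := Nat.lt_pow_succ_log_self hp.out.one_lt m
  have hz : ((k : ℤ) - m) = 0 := by
    refine Int.eq_zero_of_abs_lt_dvd hdvd ?_
    have hm' : (m : ℤ) < ((p ^ (Nat.log p m + 1) : ℕ) : ℤ) := by exact_mod_cast hm
    have hk' : (k : ℤ) < ((p ^ (Nat.log p m + 1) : ℕ) : ℤ) := by exact_mod_cast hk
    have hcast : ((p ^ (Nat.log p m + 1) : ℕ) : ℤ) = (p : ℤ) ^ (Nat.log p m + 1) := by push_cast; ring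
    rw [← hcast]
    rw [abs_sub_lt_iff]
    constructor <;> [skip; skip] <;>
      · have hk0 : (0 : ℤ) ≤ k := Int.ofNat_nonneg k
        have hm0 : (0 : ℤ) ≤ m := Int.ofNat_nonneg m
        linarith
  exact hne (by exact_mod_cast sub_eq_zero.mp hz)

lemma chi_eq_zero_of_lt {k m : ℕ} (h : k < m) : chi p m (k : ℤ_[p]) = 0 :=
  chi_eq_zero_of_ne (Nat.ne_of_lt h) (lt_trans h (Nat.lt_pow_succ_log_self hp.out.one_lt m))

end Aux
section Aux2
open VDP Finset
variable {p : ℕ} [hp : Fact p.Prime]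

lemma expansion_nat {f : ℤ_[p] → ℤ_[p]} {B : ℕ → ℤ_[p]} (hB : vdpExpansion p f B)
    {k M : ℕ} (hk : k < M) :
    f (k : ℤ_[p]) = ∑ m ∈ Finset.range M, B m * chi p m (k : ℤ_[p]) := by
  rw [hB]
  refine tsum_eq_sum (fun m hm => ?_)
  rw [Finset.mem_range, not_lt] at hm
  rw [chi_eq_zero_of_lt (lt_of_lt_of_le hk hm), mul_zero]

/-- Coefficient bound: `p ^ Nat.log p m ∣ B m`. -/
lemma coeff_dvd {f : ℤ_[p] → ℤ_[p]} {B : ℕ → ℤ_[p]} (hf : IsLip p f)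
    (hB : vdpExpansion p f B) (m : ℕ) (hm : p ≤ m) :
    (p : ℤ_[p]) ^ (Nat.log p m) ∣ B m := by
  set L := Nat.log p m with hL
  have hp1 : 1 < p := hp.out.one_lt
  have hL1 : 1 ≤ L := Nat.log_pos hp1 hm
  have hm0 : m ≠ 0 := by omega
  set r := m % p ^ L with hr
  have hple : p ^ L ≤ m := Nat.pow_log_le_self p hm0
  have hrlt : r < p ^ L := Nat.mod_lt _ (pow_pos hp.out.pos L)
  have hrm : r < m := lt_of_lt_of_le hrlt hple
  have hmlt : m < p ^ (L + 1) := Nat.lt_pow_succ_log_self hp1 m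
  -- the difference m - r is divisible by p^L
  have hnat : r + p ^ L * (m / p ^ L) = m := Nat.mod_add_div m _
  have hdiffZ : (m : ℤ) - (r : ℤ) = (p : ℤ) ^ L * ((m / p ^ L : ℕ) : ℤ) := by
    have h2 : (r : ℤ) + (p : ℤ) ^ L * ((m / p ^ L : ℕ) : ℤ) = (m : ℤ) := by exact_mod_cast hnat
    linarith
  have key : B m = f (m : ℤ_[p]) - f (r : ℤ_[p]) := by
    rw [expansion_nat hB (Nat.lt_succ_self m), expansion_nat hB (Nat.lt_succ_of_lt hrm),
      Finset.sum_range_succ, Finset.sum_range_succ, chi_self, chi_eq_zero_of_lt hrm,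
      mul_one, mul_zero]
    have hsame : ∀ m' ∈ Finset.range m,
        B m' * chi p m' ((m : ℕ) : ℤ_[p]) = B m' * chi p m' ((r : ℕ) : ℤ_[p]) := by
      intro m' hm'
      rw [Finset.mem_range] at hm'
      set L' := Nat.log p m' with hL'
      by_cases hcase : L' + 1 ≤ L
      · -- chi values agree since m ≡ r mod p^(L'+1)
        congr 1
        rw [chi_nat, chi_nat]
        have hd : ((p : ℤ) ^ (L' + 1)) ∣ ((m : ℤ) - m') - ((r : ℤ) - m') := by
          have : ((m : ℤ) - m') - ((r : ℤ) - m') = (m : ℤ) - r := by ring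
          rw [this, hdiffZ]
          exact Dvd.dvd.mul_right (pow_dvd_pow _ hcase) _
        have hiff : ((p : ℤ) ^ (L' + 1)) ∣ ((m : ℤ) - m') ↔ ((p : ℤ) ^ (L' + 1)) ∣ ((r : ℤ) - m') := by
          constructor
          · intro h; have := dvd_sub h hd; simpa using this
          · intro h; have := dvd_add hd h; simpa using this
        rw [if_congr hiff rfl rfl]
      · -- L' = L case: both sides are zero
        have hm'0 : m' ≠ 0 := by
          intro h0
          have hz : L' = 0 := by rw [hL', h0, Nat.log_zero_right]
          omega
        have hL'le : L' ≤ L := by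
          have := Nat.log_lt_of_lt_pow hm'0 (lt_trans hm' hmlt)
          omega
        have hLL : L' = L := by omega
        have hpm' : p ^ L ≤ m' := by
          rw [← hLL]; exact Nat.pow_log_le_self p hm'0
        rw [chi_eq_zero_of_ne (Nat.ne_of_lt hm').symm ?hx, chi_eq_zero_of_lt (lt_of_lt_of_le hrlt hpm')]
        case hx => rw [← hL', hLL]; exact hmlt
    rw [Finset.sum_congr rfl hsame]; ring
  rw [pdvd_iff_norm_le, key]
  calc ‖f (m : ℤ_[p]) - f (r : ℤ_[p])‖ ≤ ‖(m : ℤ_[p]) - (r : ℤ_[p])‖ := hf _ _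
    _ ≤ (p : ℝ) ^ (-(L : ℕ) : ℤ) := by
        have hc : ((m : ℤ_[p]) - (r : ℤ_[p])) = (((m : ℤ) - r : ℤ) : ℤ_[p]) := by push_cast; ring
        rw [hc, PadicInt.norm_int_le_pow_iff_dvd, hdiffZ]
        exact Dvd.dvd.mul_right dvd_rfl _

end Aux2
section Aux3
open VDP Finset
variable {p : ℕ} [hp : Fact p.Prime]

lemma chi_sum_block (m b : ℕ) :
    ∑ k ∈ Finset.Ico b (b + p ^ (Nat.log p m + 1)), chi p m (k : ℤ_[p]) = 1 := by
  have hd0 : 0 < p ^ (Nat.log p m + 1) := pow_pos hp.out.pos _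
  set dz : ℤ := ((p ^ (Nat.log p m + 1) : ℕ) : ℤ) with hdz
  have hdZ : (0 : ℤ) < dz := by rw [hdz]; exact_mod_cast hd0
  have hdzp : dz = (p : ℤ) ^ (Nat.log p m + 1) := by rw [hdz]; push_cast; ring
  have hr0 : 0 ≤ ((m : ℤ) - b) % dz := Int.emod_nonneg _ (ne_of_gt hdZ)
  have hrd : ((m : ℤ) - b) % dz < dz := Int.emod_lt_of_pos _ hdZ
  set k₀ : ℕ := b + (((m : ℤ) - b) % dz).toNat with hk₀
  have hk₀Z : (k₀ : ℤ) = b + ((m : ℤ) - b) % dz := by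
    rw [hk₀]; push_cast [Int.toNat_of_nonneg hr0]; ring
  have hdvd₀ : dz ∣ (k₀ : ℤ) - m := by
    have h : (k₀ : ℤ) - m = -(dz * (((m : ℤ) - b) / dz)) := by
      rw [hk₀Z, Int.emod_def]; ring
    rw [h]; exact dvd_neg.mpr (Dvd.intro _ rfl)
  have hmem : k₀ ∈ Finset.Ico b (b + p ^ (Nat.log p m + 1)) := by
    rw [Finset.mem_Ico]; omega
  rw [Finset.sum_eq_single k₀ ?h0 ?h1]
  · rw [chi_nat, if_pos]; rwa [hdzp] at hdvd₀
  case h1 => exact fun h => absurd hmem h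
  case h0 =>
    intro k hk hne
    rw [Finset.mem_Ico] at hk
    rw [chi_nat, if_neg]
    intro hdvd
    rw [← hdzp] at hdvd
    have hd2 : dz ∣ (k : ℤ) - k₀ := by
      have h : (k : ℤ) - k₀ = ((k : ℤ) - m) - ((k₀ : ℤ) - m) := by ring
      rw [h]; exact dvd_sub hdvd hdvd₀
    have := Int.eq_zero_of_abs_lt_dvd hd2 (by
      rw [Finset.mem_Ico] at hmem
      rw [abs_sub_lt_iff]
      constructor <;> [skip; skip] <;> · omega)
    exact hne (by exact_mod_cast sub_eq_zero.mp this)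

lemma chi_sum_blocks (m b c : ℕ) :
    ∑ k ∈ Finset.Ico b (b + c * p ^ (Nat.log p m + 1)), chi p m (k : ℤ_[p]) = (c : ℤ_[p]) := by
  induction c generalizing b with
  | zero => simp
  | succ c ih =>
    have h1 : b ≤ b + c * p ^ (Nat.log p m + 1) := Nat.le_add_right _ _
    have h2 : b + c * p ^ (Nat.log p m + 1) ≤ b + (c + 1) * p ^ (Nat.log p m + 1) := by
      have : c * p ^ (Nat.log p m + 1) ≤ (c + 1) * p ^ (Nat.log p m + 1) :=
        Nat.mul_le_mul_right _ (Nat.le_succ c)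
      omega
    rw [← Finset.sum_Ico_consecutive _ h1 h2, ih]
    have h3 : b + (c + 1) * p ^ (Nat.log p m + 1)
        = (b + c * p ^ (Nat.log p m + 1)) + p ^ (Nat.log p m + 1) := by ring
    rw [h3, chi_sum_block]
    push_cast; ring

lemma chi_sum_pow {m n : ℕ} (b : ℕ) (hLn : Nat.log p m + 1 ≤ n) :
    ∑ k ∈ Finset.Ico b (b + p ^ n), chi p m (k : ℤ_[p])
      = ((p ^ (n - (Nat.log p m + 1)) : ℕ) : ℤ_[p]) := by
  have h : p ^ n = p ^ (n - (Nat.log p m + 1)) * p ^ (Nat.log p m + 1) := by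
    rw [← pow_add]
    congr 1
    omega
  rw [h, chi_sum_blocks]

end Aux3
section Aux4
open VDP Finset
variable {p : ℕ} [hp : Fact p.Prime] {f : ℤ_[p] → ℤ_[p]} {B : ℕ → ℤ_[p]}

lemma part1 (h1 : (p : ℤ_[p]) ∣ ∑ m ∈ Finset.range p, B m)
    (h2 : ∀ n : ℕ, 2 ≤ n →
      (p : ℤ_[p]) ^ n ∣ ∑ m ∈ Finset.Ico (p ^ (n - 1)) (p ^ n), B m) :
    ∀ n : ℕ, 1 ≤ n →
      (p : ℤ_[p]) ^ n ∣ ∑ m ∈ Finset.range (p ^ n),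
        B m * ((p ^ (n - (Nat.log p m + 1)) : ℕ) : ℤ_[p]) := by
  intro n hn
  induction n with
  | zero => omega
  | succ n ih =>
    rcases Nat.eq_or_lt_of_le hn with h | h
    · -- n + 1 = 1
      have hn0 : n = 0 := by omega
      subst hn0
      rw [pow_one, pow_one]
      have : ∀ m ∈ Finset.range p, B m * ((p ^ (1 - (Nat.log p m + 1)) : ℕ) : ℤ_[p]) = B m := by
        intro m hm
        rw [Finset.mem_range] at hm
        rw [Nat.log_of_lt hm]
        norm_num
      rw [Finset.sum_congr rfl this]
      exact h1
    · have hn1 : 1 ≤ n := by omega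
      have ihn := ih hn1
      have hsplit : p ^ n ≤ p ^ (n + 1) := Nat.pow_le_pow_right hp.out.pos (Nat.le_succ n)
      rw [← Finset.sum_range_add_sum_Ico _ hsplit]
      refine dvd_add ?_ ?_
      · -- first part
        have hcongr : ∀ m ∈ Finset.range (p ^ n),
            B m * ((p ^ (n + 1 - (Nat.log p m + 1)) : ℕ) : ℤ_[p])
              = (B m * ((p ^ (n - (Nat.log p m + 1)) : ℕ) : ℤ_[p])) * (p : ℤ_[p]) := by
          intro m hm
          rw [Finset.mem_range] at hm
          have hlog : Nat.log p m + 1 ≤ n := by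
            rcases Nat.eq_zero_or_pos m with h0 | h0
            · subst h0; rw [Nat.log_zero_right]; omega
            · have := Nat.log_lt_of_lt_pow (Nat.pos_iff_ne_zero.mp h0) hm
              omega
          have he : n + 1 - (Nat.log p m + 1) = (n - (Nat.log p m + 1)) + 1 := by omega
          rw [he, pow_succ]
          push_cast
          ring
        rw [Finset.sum_congr rfl hcongr, ← Finset.sum_mul, pow_succ]
        exact mul_dvd_mul ihn dvd_rfl
      · -- second part : m ∈ [p^n, p^(n+1))
        have hcongr : ∀ m ∈ Finset.Ico (p ^ n) (p ^ (n + 1)),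
            B m * ((p ^ (n + 1 - (Nat.log p m + 1)) : ℕ) : ℤ_[p]) = B m := by
          intro m hm
          rw [Finset.mem_Ico] at hm
          rw [Nat.log_eq_of_pow_le_of_lt_pow hm.1 hm.2]
          norm_num
        rw [Finset.sum_congr rfl hcongr]
        have := h2 (n + 1) (by omega)
        simpa using this
  
/-- Sum of `f` over a block of `p ^ n` consecutive naturals is divisible by `p ^ n`. -/
lemma block_dvd (hf : IsLip p f) (hB : vdpExpansion p f B)
    (h1 : (p : ℤ_[p]) ∣ ∑ m ∈ Finset.range p, B m)
    (h2 : ∀ n : ℕ, 2 ≤ n →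
      (p : ℤ_[p]) ^ n ∣ ∑ m ∈ Finset.Ico (p ^ (n - 1)) (p ^ n), B m)
    (b n : ℕ) :
    (p : ℤ_[p]) ^ n ∣ ∑ k ∈ Finset.Ico b (b + p ^ n), f (k : ℤ_[p]) := by
  rcases Nat.eq_zero_or_pos n with hn0 | hn1
  · subst hn0; simp
  have hM : ∀ k ∈ Finset.Ico b (b + p ^ n), f (k : ℤ_[p])
      = ∑ m ∈ Finset.range (b + p ^ n), B m * chi p m (k : ℤ_[p]) := by
    intro k hk
    rw [Finset.mem_Ico] at hk
    exact expansion_nat hB hk.2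
  rw [Finset.sum_congr rfl hM, Finset.sum_comm]
  have hsplit : p ^ n ≤ b + p ^ n := by omega
  rw [← Finset.sum_range_add_sum_Ico _ hsplit]
  refine dvd_add ?_ ?_
  · -- m < p^n
    have hcongr : ∀ m ∈ Finset.range (p ^ n),
        ∑ k ∈ Finset.Ico b (b + p ^ n), B m * chi p m (k : ℤ_[p])
          = B m * ((p ^ (n - (Nat.log p m + 1)) : ℕ) : ℤ_[p]) := by
      intro m hm
      rw [Finset.mem_range] at hm
      have hlog : Nat.log p m + 1 ≤ n := by
        rcases Nat.eq_zero_or_pos m with h0 | h0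
        · subst h0; rw [Nat.log_zero_right]; omega
        · have := Nat.log_lt_of_lt_pow (Nat.pos_iff_ne_zero.mp h0) hm
          omega
      rw [← Finset.mul_sum, chi_sum_pow b hlog]
    rw [Finset.sum_congr rfl hcongr]
    exact part1 h1 h2 n hn1
  · -- m ≥ p^n
    refine Finset.dvd_sum ?_
    intro m hm
    rw [Finset.mem_Ico] at hm
    have hpm : p ≤ m := le_trans (Nat.le_self_pow (by omega) p) hm.1
    have hlog : n ≤ Nat.log p m := Nat.le_log_of_pow_le hp.out.one_lt hm.1
    have hd := coeff_dvd hf hB m hpm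
    rw [← Finset.mul_sum]
    exact ((pow_dvd_pow _ hlog).trans hd).mul_right _

end Aux4
section Aux5
open VDP Finset Filter Topology
variable {p : ℕ} [hp : Fact p.Prime] {f : ℤ_[p] → ℤ_[p]} {B : ℕ → ℤ_[p]}

/-- partial sums of f over naturals -/
noncomputable def pSum (p : ℕ) [Fact p.Prime] (f : ℤ_[p] → ℤ_[p]) (a : ℕ) : ℤ_[p] :=
  ∑ k ∈ Finset.range a, f (k : ℤ_[p])

lemma blocks_dvd (hf : IsLip p f) (hB : vdpExpansion p f B)
    (h1 : (p : ℤ_[p]) ∣ ∑ m ∈ Finset.range p, B m)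
    (h2 : ∀ n : ℕ, 2 ≤ n →
      (p : ℤ_[p]) ^ n ∣ ∑ m ∈ Finset.Ico (p ^ (n - 1)) (p ^ n), B m)
    (n c b : ℕ) :
    (p : ℤ_[p]) ^ n ∣ ∑ k ∈ Finset.Ico b (b + c * p ^ n), f (k : ℤ_[p]) := by
  induction c generalizing b with
  | zero => simp
  | succ c ih =>
    have hle1 : b ≤ b + c * p ^ n := Nat.le_add_right _ _
    have hle2 : b + c * p ^ n ≤ b + (c + 1) * p ^ n := by
      have : c * p ^ n ≤ (c + 1) * p ^ n := Nat.mul_le_mul_right _ (Nat.le_succ c)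
      omega
    rw [← Finset.sum_Ico_consecutive _ hle1 hle2]
    refine dvd_add (ih b) ?_
    have h3 : b + (c + 1) * p ^ n = (b + c * p ^ n) + p ^ n := by ring
    rw [h3]
    exact block_dvd hf hB h1 h2 _ n

lemma pSum_dvd (hf : IsLip p f) (hB : vdpExpansion p f B)
    (h1 : (p : ℤ_[p]) ∣ ∑ m ∈ Finset.range p, B m)
    (h2 : ∀ n : ℕ, 2 ≤ n →
      (p : ℤ_[p]) ^ n ∣ ∑ m ∈ Finset.Ico (p ^ (n - 1)) (p ^ n), B m)
    {a b n : ℕ} (hd : ((p : ℤ) ^ n) ∣ (a : ℤ) - b) :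
    (p : ℤ_[p]) ^ n ∣ pSum p f a - pSum p f b := by
  have key : ∀ a b : ℕ, b ≤ a → ((p : ℤ) ^ n) ∣ (a : ℤ) - b →
      (p : ℤ_[p]) ^ n ∣ pSum p f a - pSum p f b := by
    intro a b hba hd
    have hdn : p ^ n ∣ a - b := by
      have heq : ((a - b : ℕ) : ℤ) = (a : ℤ) - b := by omega
      have h' : ((p ^ n : ℕ) : ℤ) ∣ ((a - b : ℕ) : ℤ) := by rw [heq]; exact_mod_cast hd
      exact_mod_cast h'
    obtain ⟨c, hc⟩ := hdn
    have ha : a = b + c * p ^ n := by rw [Nat.mul_comm]; omega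
    have hsub : pSum p f a - pSum p f b = ∑ k ∈ Finset.Ico b a, f (k : ℤ_[p]) := by
      rw [Finset.sum_Ico_eq_sub _ hba]; rfl
    rw [hsub, ha]
    exact blocks_dvd hf hB h1 h2 n c b
  rcases le_total b a with hba | hab
  · exact key a b hba hd
  · have hd' : ((p : ℤ) ^ n) ∣ (b : ℤ) - a := by
      have h : (b : ℤ) - a = -((a : ℤ) - b) := by ring
      rw [h]; exact dvd_neg.mpr hd
    have hres := key b a hab hd'
    have h2' : pSum p f a - pSum p f b = -(pSum p f b - pSum p f a) := by ring
    rw [h2']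
    exact dvd_neg.mpr hres

lemma pSum_norm_le (hf : IsLip p f) (hB : vdpExpansion p f B)
    (h1 : (p : ℤ_[p]) ∣ ∑ m ∈ Finset.range p, B m)
    (h2 : ∀ n : ℕ, 2 ≤ n →
      (p : ℤ_[p]) ^ n ∣ ∑ m ∈ Finset.Ico (p ^ (n - 1)) (p ^ n), B m)
    (a b : ℕ) :
    ‖pSum p f a - pSum p f b‖ ≤ ‖(a : ℤ_[p]) - (b : ℤ_[p])‖ := by
  by_cases hz : (a : ℤ_[p]) = (b : ℤ_[p])
  · have : a = b := by exact_mod_cast hz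
    subst this; simp
  · set z : ℤ_[p] := (a : ℤ_[p]) - b with hzdef
    have hz0 : z ≠ 0 := sub_ne_zero.mpr hz
    set n : ℕ := z.valuation with hn
    have hval : (n : ℤ) = z.valuation := rfl
    have hnorm : ‖z‖ = (p : ℝ) ^ (-n : ℤ) := by
      rw [PadicInt.norm_eq_zpow_neg_valuation hz0]
    have hcast : z = (((a : ℤ) - b : ℤ) : ℤ_[p]) := by rw [hzdef]; push_cast; ring
    have hdvd : ((p : ℤ) ^ n) ∣ (a : ℤ) - b := by
      rw [← PadicInt.norm_int_le_pow_iff_dvd, ← hcast, hnorm]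
    have := pSum_dvd hf hB h1 h2 hdvd
    rw [pdvd_iff_norm_le] at this
    rw [hnorm]
    exact this

end Aux5
end VDP

open VDP Finset in
theorem stmt10 (p : ℕ) [Fact p.Prime] (f : ℤ_[p] → ℤ_[p]) (B : ℕ → ℤ_[p])
    (hf : IsLip p f) (hB : vdpExpansion p f B)
    (h1 : (p : ℤ_[p]) ∣ ∑ m ∈ Finset.range p, B m)
    (h2 : ∀ n : ℕ, 2 ≤ n →
      (p : ℤ_[p]) ^ n ∣ ∑ m ∈ Finset.Ico (p ^ (n - 1)) (p ^ n), B m) :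
    ∃ g : ℤ_[p] → ℤ_[p], IsLip p g ∧ ∀ x, f x = g (x + 1) - g x := by
  classical
  have hp1 : 1 < p := ‹Fact p.Prime›.out.one_lt
  have hp1R : (1 : ℝ) < p := by exact_mod_cast hp1
  have happr : ∀ (x : ℤ_[p]) (n : ℕ), ‖x - (x.appr n : ℤ_[p])‖ ≤ (p : ℝ) ^ (-n : ℤ) := by
    intro x n
    rw [PadicInt.norm_le_pow_iff_mem_span_pow]
    exact PadicInt.appr_spec n x
  have hb0 : Filter.Tendsto (fun n : ℕ => (p : ℝ) ^ (-n : ℤ)) Filter.atTop (nhds 0) := by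
    have h : ∀ n : ℕ, (p : ℝ) ^ (-n : ℤ) = ((p : ℝ)⁻¹) ^ n := by
      intro n; rw [zpow_neg, zpow_natCast, inv_pow]
    simp only [h]
    exact tendsto_pow_atTop_nhds_zero_of_lt_one (by positivity) (inv_lt_one_of_one_lt₀ hp1R)
  have hmono : ∀ {N n : ℕ}, N ≤ n → (p : ℝ) ^ (-n : ℤ) ≤ (p : ℝ) ^ (-N : ℤ) := by
    intro N n h
    exact zpow_le_zpow_right₀ hp1R.le (by exact_mod_cast Int.neg_le_neg (Int.ofNat_le.mpr h))
  have hcau : ∀ x : ℤ_[p], CauchySeq (fun n => pSum p f (x.appr n)) := by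
    intro x
    apply cauchySeq_of_le_tendsto_0 _ _ hb0
    intro n m N hn hm
    rw [dist_eq_norm]
    calc ‖pSum p f (x.appr n) - pSum p f (x.appr m)‖
        ≤ ‖((x.appr n : ℕ) : ℤ_[p]) - ((x.appr m : ℕ) : ℤ_[p])‖ := pSum_norm_le hf hB h1 h2 _ _
      _ ≤ (p : ℝ) ^ (-N : ℤ) := by
          have hsum : ((x.appr n : ℕ) : ℤ_[p]) - ((x.appr m : ℕ) : ℤ_[p])
              = -(x - (x.appr n : ℤ_[p])) + (x - (x.appr m : ℤ_[p])) := by ring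
          rw [hsum]
          refine le_trans (PadicInt.nonarchimedean _ _) (max_le ?_ ?_)
          · rw [norm_neg]; exact le_trans (happr x n) (hmono hn)
          · exact le_trans (happr x m) (hmono hm)
  choose g hg using fun x => cauchySeq_tendsto_of_complete (hcau x)
  have happrT : ∀ x : ℤ_[p],
      Filter.Tendsto (fun n => ((x.appr n : ℕ) : ℤ_[p])) Filter.atTop (nhds x) := by
    intro x
    rw [tendsto_iff_dist_tendsto_zero]
    refine squeeze_zero (fun n => dist_nonneg) (fun n => ?_) hb0
    rw [dist_eq_norm, norm_sub_rev]
    exact happr x n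
  have hgnat : ∀ N : ℕ, g ((N : ℕ) : ℤ_[p]) = pSum p f N := by
    intro N
    refine tendsto_nhds_unique (hg _) ?_
    rw [tendsto_iff_dist_tendsto_zero]
    refine squeeze_zero (fun n => dist_nonneg) (fun n => ?_) hb0
    rw [dist_eq_norm]
    calc ‖pSum p f (((N : ℤ_[p]).appr n)) - pSum p f N‖
        ≤ ‖((((N : ℤ_[p]).appr n : ℕ)) : ℤ_[p]) - ((N : ℕ) : ℤ_[p])‖ := pSum_norm_le hf hB h1 h2 _ _
      _ ≤ (p : ℝ) ^ (-n : ℤ) := by rw [norm_sub_rev]; exact happr _ n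
  have hlip : IsLip p g := by
    intro x y
    have hsub : Filter.Tendsto (fun n => pSum p f (x.appr n) - pSum p f (y.appr n))
        Filter.atTop (nhds (g x - g y)) := (hg x).sub (hg y)
    have hsub2 : Filter.Tendsto (fun n => ((x.appr n : ℕ) : ℤ_[p]) - ((y.appr n : ℕ) : ℤ_[p]))
        Filter.atTop (nhds (x - y)) := (happrT x).sub (happrT y)
    exact le_of_tendsto_of_tendsto' hsub.norm hsub2.norm
      (fun n => pSum_norm_le hf hB h1 h2 _ _)
  refine ⟨g, hlip, ?_⟩
  have hcont : ∀ (h : ℤ_[p] → ℤ_[p]), IsLip p h → Continuous h := by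
    intro h hh
    refine (LipschitzWith.of_dist_le_mul (K := 1) (fun x y => ?_)).continuous
    rw [dist_eq_norm, dist_eq_norm, NNReal.coe_one, one_mul]
    exact hh x y
  have hcf : Continuous f := hcont f hf
  have hcg : Continuous g := hcont g hlip
  have heq : f = fun x => g (x + 1) - g x := by
    refine Continuous.ext_on (PadicInt.denseRange_natCast) hcf
      ((hcg.comp (continuous_id.add continuous_const)).sub hcg) ?_
    rintro z ⟨N, rfl⟩
    show f ((N : ℕ) : ℤ_[p]) = g (((N : ℕ) : ℤ_[p]) + 1) - g ((N : ℕ) : ℤ_[p])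
    have hc : ((N : ℕ) : ℤ_[p]) + 1 = (((N + 1 : ℕ)) : ℤ_[p]) := by push_cast; ring
    rw [hc, hgnat, hgnat]
    have hs : pSum p f (N + 1) = pSum p f N + f ((N : ℕ) : ℤ_[p]) := Finset.sum_range_succ _ _
    rw [hs]
    ring
  intro x
  rw [heq]
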